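/- Let Δ: [0,Λ] → ℝ be three times continuously differentiable with Δ(0) = 2, Δ'(0) = 0, and Δ''(0) < 0. Let K > 0 satisfy K ≥ sup_{λ∈[0,Λ]} |Δ'''(λ)|, set μ = 3|Δ''(0)|/K, and define p(λ) = Kλ³ − 3Δ''(0)λ² − 24. If p(Λ) ≤ 0, then |Δ(λ)| < 2 for all λ ∈ (0, min{μ, Λ}). -/

import Mathlib

open Set

/-- If `f 0 = 0` and `f` has nonnegative derivative on `Icc 0 Λ`, then `f ≥ 0` there. -/
lemma stmt1_nonneg_aux {Λ : ℝ} (hΛ : 0 ≤ Λ) {f f' : ℝ → ℝ}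
    (hf : ∀ x ∈ Icc (0:ℝ) Λ, HasDerivWithinAt f (f' x) (Icc 0 Λ) x)
    (h0 : f 0 = 0) (hpos : ∀ x ∈ Icc (0:ℝ) Λ, 0 ≤ f' x) :
    ∀ x ∈ Icc (0:ℝ) Λ, 0 ≤ f x := by
  have mono : MonotoneOn f (Icc (0:ℝ) Λ) := by
    apply monotoneOn_of_hasDerivWithinAt_nonneg (convex_Icc 0 Λ)
      (fun x hx => (hf x hx).continuousWithinAt)
      (fun x hx => (hf x (interior_subset hx)).mono interior_subset)
      (fun x hx => hpos x (interior_subset hx))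
  intro x hx
  rw [← h0]
  exact mono (left_mem_Icc.2 hΛ) hx hx.1

/-- Quantified ellipticity criterion, case p(Λ) ≤ 0. -/
theorem stmt1 (Λ : ℝ) (hΛ : 0 < Λ)
    (Δ d1 d2 d3 : ℝ → ℝ)
    (hd1 : ∀ x ∈ Icc (0:ℝ) Λ, HasDerivWithinAt Δ (d1 x) (Icc 0 Λ) x)
    (hd2 : ∀ x ∈ Icc (0:ℝ) Λ, HasDerivWithinAt d1 (d2 x) (Icc 0 Λ) x)
    (hd3 : ∀ x ∈ Icc (0:ℝ) Λ, HasDerivWithinAt d2 (d3 x) (Icc 0 Λ) x)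
    (hcont : ContinuousOn d3 (Icc 0 Λ))
    (hΔ0 : Δ 0 = 2) (hd10 : d1 0 = 0) (hd20 : d2 0 < 0)
    (K : ℝ) (hK : 0 < K) (hKbound : ∀ x ∈ Icc (0:ℝ) Λ, |d3 x| ≤ K)
    (μ : ℝ) (hμ : μ = 3 * |d2 0| / K)
    (p : ℝ → ℝ) (hp : ∀ lam : ℝ, p lam = K * lam^3 - 3 * d2 0 * lam^2 - 24)
    (hpΛ : p Λ ≤ 0) :
    ∀ lam ∈ Ioo (0:ℝ) (min μ Λ), |Δ lam| < 2 := by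
  have hΛ0 : (0:ℝ) ≤ Λ := hΛ.le
  -- layer 1: |d2 x - d2 0| ≤ K x
  have hA : ∀ x ∈ Icc (0:ℝ) Λ, d2 x - d2 0 ≤ K * x := by
    have := stmt1_nonneg_aux hΛ0 (f := fun x => K * x - (d2 x - d2 0))
      (f' := fun x => K - d3 x)
      (fun x hx => by
        simpa [Pi.sub_def] using (((hasDerivWithinAt_id x _).const_mul K).sub
          (((hd3 x hx).sub_const (d2 0)))))
      (by simp) (fun x hx => by
        have := (abs_le.mp (hKbound x hx)).2; linarith)
    intro x hx; have := this x hx; linarith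
  have hB : ∀ x ∈ Icc (0:ℝ) Λ, -(K * x) ≤ d2 x - d2 0 := by
    have := stmt1_nonneg_aux hΛ0 (f := fun x => K * x + (d2 x - d2 0))
      (f' := fun x => K + d3 x)
      (fun x hx => by
        simpa [Pi.add_def] using (((hasDerivWithinAt_id x _).const_mul K).add
          (((hd3 x hx).sub_const (d2 0)))))
      (by simp) (fun x hx => by
        have := (abs_le.mp (hKbound x hx)).1; linarith)
    intro x hx; have := this x hx; linarith
  -- layer 2: |d1 x - d2 0 * x| ≤ K x^2 / 2
  have hC : ∀ x ∈ Icc (0:ℝ) Λ, d1 x - d2 0 * x ≤ K * x^2 / 2 := by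
    have := stmt1_nonneg_aux hΛ0 (f := fun x => K * x^2 / 2 - (d1 x - d2 0 * x))
      (f' := fun x => K * x - (d2 x - d2 0))
      (fun x hx => by
        have h1 : HasDerivWithinAt (fun x : ℝ => K * x^2 / 2) (K * x) (Icc 0 Λ) x := by
          have := ((hasDerivWithinAt_pow 2 x (s := Icc (0:ℝ) Λ)).const_mul K).div_const 2
          exact this.congr_deriv (by norm_num; ring)
        have h2 : HasDerivWithinAt (fun x : ℝ => d1 x - d2 0 * x) (d2 x - d2 0)
            (Icc 0 Λ) x := by
          simpa [Pi.sub_def] using (hd2 x hx).sub ((hasDerivWithinAt_id x _).const_mul (d2 0))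
        exact h1.sub h2)
      (by simp [hd10]) (fun x hx => by have := hA x hx; linarith)
    intro x hx; have := this x hx; linarith
  have hD : ∀ x ∈ Icc (0:ℝ) Λ, -(K * x^2 / 2) ≤ d1 x - d2 0 * x := by
    have := stmt1_nonneg_aux hΛ0 (f := fun x => K * x^2 / 2 + (d1 x - d2 0 * x))
      (f' := fun x => K * x + (d2 x - d2 0))
      (fun x hx => by
        have h1 : HasDerivWithinAt (fun x : ℝ => K * x^2 / 2) (K * x) (Icc 0 Λ) x := by
          have := ((hasDerivWithinAt_pow 2 x (s := Icc (0:ℝ) Λ)).const_mul K).div_const 2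
          exact this.congr_deriv (by norm_num; ring)
        have h2 : HasDerivWithinAt (fun x : ℝ => d1 x - d2 0 * x) (d2 x - d2 0)
            (Icc 0 Λ) x := by
          simpa [Pi.sub_def] using (hd2 x hx).sub ((hasDerivWithinAt_id x _).const_mul (d2 0))
        exact h1.add h2)
      (by simp [hd10]) (fun x hx => by have := hB x hx; linarith)
    intro x hx; have := this x hx; linarith
  -- layer 3: |Δ x - 2 - d2 0 * x^2 / 2| ≤ K x^3 / 6
  have hE : ∀ x ∈ Icc (0:ℝ) Λ, Δ x - 2 - d2 0 * x^2 / 2 ≤ K * x^3 / 6 := by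
    have := stmt1_nonneg_aux hΛ0
      (f := fun x => K * x^3 / 6 - (Δ x - 2 - d2 0 * x^2 / 2))
      (f' := fun x => K * x^2 / 2 - (d1 x - d2 0 * x))
      (fun x hx => by
        have h1 : HasDerivWithinAt (fun x : ℝ => K * x^3 / 6) (K * x^2 / 2) (Icc 0 Λ) x := by
          have := ((hasDerivWithinAt_pow 3 x (s := Icc (0:ℝ) Λ)).const_mul K).div_const 6
          exact this.congr_deriv (by norm_num; ring)
        have h2 : HasDerivWithinAt (fun x : ℝ => Δ x - 2 - d2 0 * x^2 / 2)
            (d1 x - d2 0 * x) (Icc 0 Λ) x := by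
          have h3 : HasDerivWithinAt (fun x : ℝ => d2 0 * x^2 / 2) (d2 0 * x) (Icc 0 Λ) x := by
            have := ((hasDerivWithinAt_pow 2 x (s := Icc (0:ℝ) Λ)).const_mul (d2 0)).div_const 2
            exact this.congr_deriv (by norm_num; ring)
          simpa [Pi.sub_def] using ((hd1 x hx).sub_const 2).sub h3
        exact h1.sub h2)
      (by simp [hΔ0]) (fun x hx => by have := hC x hx; linarith)
    intro x hx; have := this x hx; linarith
  have hF : ∀ x ∈ Icc (0:ℝ) Λ, -(K * x^3 / 6) ≤ Δ x - 2 - d2 0 * x^2 / 2 := by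
    have := stmt1_nonneg_aux hΛ0
      (f := fun x => K * x^3 / 6 + (Δ x - 2 - d2 0 * x^2 / 2))
      (f' := fun x => K * x^2 / 2 + (d1 x - d2 0 * x))
      (fun x hx => by
        have h1 : HasDerivWithinAt (fun x : ℝ => K * x^3 / 6) (K * x^2 / 2) (Icc 0 Λ) x := by
          have := ((hasDerivWithinAt_pow 3 x (s := Icc (0:ℝ) Λ)).const_mul K).div_const 6
          exact this.congr_deriv (by norm_num; ring)
        have h2 : HasDerivWithinAt (fun x : ℝ => Δ x - 2 - d2 0 * x^2 / 2)
            (d1 x - d2 0 * x) (Icc 0 Λ) x := by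
          have h3 : HasDerivWithinAt (fun x : ℝ => d2 0 * x^2 / 2) (d2 0 * x) (Icc 0 Λ) x := by
            have := ((hasDerivWithinAt_pow 2 x (s := Icc (0:ℝ) Λ)).const_mul (d2 0)).div_const 2
            exact this.congr_deriv (by norm_num; ring)
          simpa [Pi.sub_def] using ((hd1 x hx).sub_const 2).sub h3
        exact h1.add h2)
      (by simp [hΔ0]) (fun x hx => by have := hD x hx; linarith)
    intro x hx; have := this x hx; linarith
  -- conclusion
  intro lam hlam
  obtain ⟨hl0, hlm⟩ := hlam
  have hlμ : lam < μ := lt_of_lt_of_le hlm (min_le_left _ _)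
  have hlΛ : lam < Λ := lt_of_lt_of_le hlm (min_le_right _ _)
  have hmem : lam ∈ Icc (0:ℝ) Λ := ⟨hl0.le, hlΛ.le⟩
  have habs : |d2 0| = -(d2 0) := abs_of_neg hd20
  have hμ' : K * lam < 3 * (-(d2 0)) := by
    have : lam < 3 * (-(d2 0)) / K := by rw [hμ, habs] at hlμ; exact hlμ
    calc K * lam < K * (3 * (-(d2 0)) / K) := by
          exact mul_lt_mul_of_pos_left this hK
      _ = 3 * (-(d2 0)) := by rw [mul_comm, div_mul_cancel₀ _ hK.ne']
  have hup := hE lam hmem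
  have hlo := hF lam hmem
  have hpl : p lam < 0 := by
    have h1 : p lam < p Λ := by
      rw [hp lam, hp Λ]
      have h2 : lam^2 < Λ^2 := by nlinarith
      have h3 : lam^3 < Λ^3 := by nlinarith
      have hA2 := mul_lt_mul_of_pos_left h3 hK
      have hB2 := mul_lt_mul_of_pos_left h2 (by linarith : (0:ℝ) < -(3 * d2 0))
      nlinarith
    linarith
  rw [hp lam] at hpl
  rw [abs_lt]
  constructor
  · -- -2 < Δ lam, i.e. Δ lam - 2 > -4
    nlinarith [hlo]
  · -- Δ lam < 2, i.e. Δ lam - 2 < 0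
    have hpos : 0 < lam^2 := by positivity
    nlinarith [mul_lt_mul_of_pos_right hμ' hpos]
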